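/- Let S be a standard N^k-graded polynomial ring over a field k, M a finitely generated Z^k-graded S-module with beg^{(l)}(M) = min{n_l : M_n ≠ 0}, and I a multigraded homogeneous ideal. Define ρ^{(l)}_M(I) as the minimum over all M-reductions J of I of the maximal l-th coordinate of a minimal generating degree of J. Then for every n ≥ 0, the maximal l-th coordinate d^{(l)}(I^n M) among minimal generating degrees of I^n M satisfies d^{(l)}(I^n M) ≥ n·ρ^{(l)}_M(I) + beg^{(l)}(M). -/

import Mathlib

open MvPolynomial

/-! Setup: `S = 𝕜[x_{l,j} : l < k, j < N l]` is the standard `ℕ^k`-graded polynomial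
ring, realized as `MvPolynomial (Σ l : Fin k, Fin (N l)) 𝕜` graded by the weight
`wt ⟨l,j⟩ = e_l ∈ ℤ^k`.  A finitely generated `ℤ^k`-graded `S`-module is a module
`M` with a decomposition `ℳ : (Fin k → ℤ) → Submodule 𝕜 M` compatible with the
grading of `S`. -/

/-- The weight of the variable `x_{l,j}` is the `l`-th standard unit vector. -/
noncomputable def wt (k : ℕ) (N : Fin k → ℕ) : (Σ l : Fin k, Fin (N l)) → (Fin k → ℤ) :=
  fun i => Pi.single i.1 1

/-- `aInvE l P` is `max { n l | P n }` as an extended real number (`⊥ = -∞` when no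
degree satisfies `P`, `⊤ = +∞` when the set of such coordinates is unbounded). -/
noncomputable def aInvE {k : ℕ} (l : Fin k) (P : (Fin k → ℤ) → Prop) : EReal :=
  sSup {x : EReal | ∃ n : Fin k → ℤ, P n ∧ x = ((n l : ℝ) : EReal)}

/-- Casting `ℤ → EReal`. -/
noncomputable def zE (d : ℤ) : EReal := ((d : ℝ) : EReal)

section

variable (k : ℕ) (N : Fin k → ℕ) (𝕜 : Type*) [Field 𝕜]

/-- The ideal generated by all the variables. -/
noncomputable def mIdeal : Ideal (MvPolynomial (Σ l : Fin k, Fin (N l)) 𝕜) :=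
  Ideal.span (Set.range X)

/-- An ideal is (multigraded) homogeneous if it contains all the weighted homogeneous
components of its elements. -/
def IsHomog (J : Ideal (MvPolynomial (Σ l : Fin k, Fin (N l)) 𝕜)) : Prop :=
  ∀ f ∈ J, ∀ n : Fin k → ℤ, weightedHomogeneousComponent (wt k N) n f ∈ J

/-- `d^{(l)}(J)` for a homogeneous ideal `J`: the supremum (in `EReal`) of the `l`-th
coordinates of the minimal generating degrees of `J`, i.e. of the degrees `n` with
`(J/𝔪J)_n ≠ 0`. -/
noncomputable def dlIdeal (l : Fin k)
    (J : Ideal (MvPolynomial (Σ l : Fin k, Fin (N l)) 𝕜)) : EReal :=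
  sSup {x : EReal | ∃ n : Fin k → ℤ, (∃ f ∈ J,
    f ∈ weightedHomogeneousSubmodule 𝕜 (wt k N) n ∧ f ∉ mIdeal k N 𝕜 * J) ∧
    x = zE (n l)}

variable (M : Type*) [AddCommGroup M] [Module 𝕜 M]
    [Module (MvPolynomial (Σ l : Fin k, Fin (N l)) 𝕜) M]

/-- `d^{(l)}` of a (graded) submodule `P ⊆ M`: the supremum of the `l`-th coordinates
of degrees `n` with `(P/𝔪P)_n ≠ 0`. -/
noncomputable def dlSubmodule (ℳ : (Fin k → ℤ) → Submodule 𝕜 M) (l : Fin k)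
    (P : Submodule (MvPolynomial (Σ l : Fin k, Fin (N l)) 𝕜) M) : EReal :=
  sSup {x : EReal | ∃ n : Fin k → ℤ,
    (∃ m ∈ ℳ n, m ∈ P ∧ m ∉ (mIdeal k N 𝕜 • P :
        Submodule (MvPolynomial (Σ l : Fin k, Fin (N l)) 𝕜) M)) ∧
    x = zE (n l)}

/-- `J` is an `M`-reduction of `I`: `J ⊆ I` homogeneous with `IⁿM = J I^{n-1} M` for
all `n ≫ 0`. -/
def IsMReduction (I J : Ideal (MvPolynomial (Σ l : Fin k, Fin (N l)) 𝕜)) : Prop :=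
  J ≤ I ∧ IsHomog k N 𝕜 J ∧ ∃ n₀ : ℕ, ∀ n ≥ n₀,
    (I ^ (n + 1) • ⊤ : Submodule (MvPolynomial (Σ l : Fin k, Fin (N l)) 𝕜) M) =
      J • (I ^ n • ⊤ : Submodule (MvPolynomial (Σ l : Fin k, Fin (N l)) 𝕜) M)

end

section Aux
set_option linter.unusedSectionVars false
variable {k : ℕ} {N : Fin k → ℕ} {𝕜 : Type*} [Field 𝕜]

abbrev SS (k : ℕ) (N : Fin k → ℕ) (𝕜 : Type*) [Field 𝕜] : Type _ :=
  MvPolynomial (Σ l : Fin k, Fin (N l)) 𝕜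

def tauz {k : ℕ} (n : Fin k → ℤ) : ℤ := ∑ l, n l

lemma tauz_add (a b : Fin k → ℤ) : tauz (a + b) = tauz a + tauz b := by
  simp [tauz, Finset.sum_add_distrib]

lemma tauz_sub (a b : Fin k → ℤ) : tauz (a - b) = tauz a - tauz b := by
  simp [tauz, Finset.sum_sub_distrib]

lemma wt_coord_nonneg (i : Σ l : Fin k, Fin (N l)) (l : Fin k) : 0 ≤ wt k N i l := by
  simp only [wt, Pi.single_apply]
  split <;> norm_num

lemma tauz_wt (i : Σ l : Fin k, Fin (N l)) : tauz (wt k N i) = 1 := by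
  simp [tauz, wt, Pi.single_apply]

lemma weight_coord_nonneg (d : (Σ l : Fin k, Fin (N l)) →₀ ℕ) (l : Fin k) :
    0 ≤ Finsupp.weight (wt k N) d l := by
  classical
  rw [Finsupp.weight_apply, Finsupp.sum, Finset.sum_apply]
  exact Finset.sum_nonneg fun i _ => by
    rw [Pi.smul_apply]
    exact nsmul_nonneg (wt_coord_nonneg i l) _

lemma tauz_weight (d : (Σ l : Fin k, Fin (N l)) →₀ ℕ) :
    tauz (Finsupp.weight (wt k N) d) = ∑ i ∈ d.support, (d i : ℤ) := by
  classical
  rw [Finsupp.weight_apply, Finsupp.sum, tauz]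
  simp only [Finset.sum_apply]
  rw [Finset.sum_comm]
  refine Finset.sum_congr rfl fun i _ => ?_
  simp only [Pi.smul_apply]
  rw [← Finset.smul_sum]
  have : ∑ l, wt k N i l = 1 := tauz_wt i
  rw [this, nsmul_eq_mul, mul_one]

lemma tauz_weight_nonneg (d : (Σ l : Fin k, Fin (N l)) →₀ ℕ) :
    0 ≤ tauz (Finsupp.weight (wt k N) d) := by
  rw [tauz_weight]
  exact Finset.sum_nonneg fun i _ => Int.natCast_nonneg _

lemma tauz_weight_pos (d : (Σ l : Fin k, Fin (N l)) →₀ ℕ) (hd : d ≠ 0) :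
    1 ≤ tauz (Finsupp.weight (wt k N) d) := by
  rw [tauz_weight]
  obtain ⟨i, hi⟩ := Finsupp.support_nonempty_iff.mpr hd
  have h1 : (1 : ℤ) ≤ (d i : ℤ) := by
    have := Finsupp.mem_support_iff.mp hi
    omega
  calc (1:ℤ) ≤ (d i : ℤ) := h1
    _ ≤ ∑ j ∈ d.support, (d j : ℤ) :=
      Finset.single_le_sum (fun j _ => Int.natCast_nonneg _) hi

lemma mem_mIdeal_iff {f : SS k N 𝕜} : f ∈ mIdeal k N 𝕜 ↔ coeff 0 f = 0 := by
  classical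
  rw [mIdeal, ← Set.image_univ, mem_ideal_span_X_image]
  constructor
  · intro h
    by_contra h0
    obtain ⟨i, _, hi⟩ := h 0 (mem_support_iff.mpr h0)
    simp at hi
  · intro h m hm
    have hm0 : m ≠ 0 := by
      intro e
      rw [e] at hm
      exact mem_support_iff.mp hm h
    obtain ⟨i, hi⟩ := Finsupp.ne_iff.mp hm0
    exact ⟨i, Set.mem_univ _, by simpa using hi⟩

lemma exists_weight {f : SS k N 𝕜} {e : Fin k → ℤ}
    (hf : IsWeightedHomogeneous (wt k N) f e) (h0 : f ≠ 0) :
    ∃ d, coeff d f ≠ 0 ∧ Finsupp.weight (wt k N) d = e := by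
  obtain ⟨d, hd⟩ := ne_zero_iff.mp h0
  exact ⟨d, hd, hf hd⟩

lemma homog_mem_mIdeal {f : SS k N 𝕜} {e : Fin k → ℤ}
    (hf : IsWeightedHomogeneous (wt k N) f e) (he : e ≠ 0) : f ∈ mIdeal k N 𝕜 := by
  rw [mem_mIdeal_iff]
  by_contra h0
  apply he
  have := hf h0
  simpa using this.symm

lemma isHomog_mIdeal : IsHomog k N 𝕜 (mIdeal k N 𝕜) := by
  classical
  intro f hf n
  rw [mem_mIdeal_iff] at hf ⊢
  rw [coeff_weightedHomogeneousComponent]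
  split <;> simp [hf]

noncomputable def compSupp (f : SS k N 𝕜) : Finset (Fin k → ℤ) :=
  (weightedHomogeneousComponent_finsupp (w := wt k N) f).toFinset

lemma sum_compSupp (f : SS k N 𝕜) :
    ∑ e ∈ compSupp f, weightedHomogeneousComponent (wt k N) e f = f := by
  rw [compSupp, ← finsum_eq_sum _ (weightedHomogeneousComponent_finsupp f)]
  exact sum_weightedHomogeneousComponent _ f

lemma not_mem_compSupp {f : SS k N 𝕜} {e : Fin k → ℤ} (h : e ∉ compSupp f) :
    weightedHomogeneousComponent (wt k N) e f = 0 := by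
  by_contra h0
  exact h ((Set.Finite.mem_toFinset _).mpr h0)

lemma coord_nonneg_of_homog {a : SS k N 𝕜} {e : Fin k → ℤ}
    (ha : IsWeightedHomogeneous (wt k N) a e) (h0 : a ≠ 0) (l : Fin k) : 0 ≤ e l := by
  obtain ⟨d, _, hd⟩ := exists_weight ha h0
  rw [← hd]
  exact weight_coord_nonneg d l

lemma tauz_nonneg_of_homog {a : SS k N 𝕜} {e : Fin k → ℤ}
    (ha : IsWeightedHomogeneous (wt k N) a e) (h0 : a ≠ 0) : 0 ≤ tauz e := by
  obtain ⟨d, _, hd⟩ := exists_weight ha h0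
  rw [← hd]; exact tauz_weight_nonneg d

lemma tauz_pos_of_homog_mem {a : SS k N 𝕜} {e : Fin k → ℤ}
    (ha : IsWeightedHomogeneous (wt k N) a e) (h0 : a ≠ 0) (hm : a ∈ mIdeal k N 𝕜) :
    1 ≤ tauz e := by
  obtain ⟨d, hd0, hd⟩ := exists_weight ha h0
  have : d ≠ 0 := by
    intro e'
    rw [e'] at hd0
    exact hd0 (mem_mIdeal_iff.mp hm)
  rw [← hd]; exact tauz_weight_pos d this


section Ring2

noncomputable local instance : DirectSum.Decomposition (weightedHomogeneousSubmodule 𝕜 (wt k N)) :=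
  weightedDecomposition 𝕜 (wt k N)

def DleR (l : Fin k) (γ : ℤ) (a : SS k N 𝕜) : Prop :=
  ∀ e : Fin k → ℤ, weightedHomogeneousComponent (wt k N) e a ≠ 0 → γ ≤ e l

end Ring2

section Mod

variable {M : Type*} [AddCommGroup M] [Module 𝕜 M]
    [Module (SS k N 𝕜) M] [IsScalarTower 𝕜 (SS k N 𝕜) M]
variable (ℳ : (Fin k → ℤ) → Submodule 𝕜 M) [DirectSum.Decomposition ℳ]

noncomputable def projM (n : Fin k → ℤ) (m : M) : M := (DirectSum.decompose ℳ m n : M)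

lemma projM_mem (n : Fin k → ℤ) (m : M) : projM ℳ n m ∈ ℳ n := SetLike.coe_mem _

lemma projM_add (n : Fin k → ℤ) (a b : M) :
    projM ℳ n (a + b) = projM ℳ n a + projM ℳ n b := by
  simp [projM, DirectSum.decompose_add, DirectSum.add_apply]

lemma projM_zero (n : Fin k → ℤ) : projM ℳ n (0 : M) = 0 := by
  simp [projM]

lemma projM_sum {ι : Type*} (s : Finset ι) (f : ι → M) (n : Fin k → ℤ) :
    projM ℳ n (∑ i ∈ s, f i) = ∑ i ∈ s, projM ℳ n (f i) := by
  classical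
  induction s using Finset.induction_on with
  | empty => simp [projM_zero]
  | insert _ _ h ih => rw [Finset.sum_insert h, Finset.sum_insert h, projM_add, ih]

lemma projM_of_mem_same {n : Fin k → ℤ} {m : M} (h : m ∈ ℳ n) : projM ℳ n m = m :=
  DirectSum.decompose_of_mem_same ℳ h

lemma projM_of_mem_ne {n n' : Fin k → ℤ} {m : M} (h : m ∈ ℳ n) (hne : n ≠ n') :
    projM ℳ n' m = 0 :=
  DirectSum.decompose_of_mem_ne ℳ h hne

lemma sum_projM (m : M) : ∃ s : Finset (Fin k → ℤ),
    (∀ n ∉ s, projM ℳ n m = 0) ∧ ∑ n ∈ s, projM ℳ n m = m := by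
  classical
  refine ⟨(DirectSum.decompose ℳ m).support, fun n hn => ?_, DirectSum.sum_support_decompose ℳ m⟩
  have h0 := DFinsupp.notMem_support_iff.mp hn
  simp [projM, h0]

variable {ℳ}

lemma projM_smul_homog
    (hsmul : ∀ (e n : Fin k → ℤ), ∀ s ∈ weightedHomogeneousSubmodule 𝕜 (wt k N) e,
      ∀ m ∈ ℳ n, s • m ∈ ℳ (e + n))
    {a : SS k N 𝕜} {e : Fin k → ℤ} (ha : a ∈ weightedHomogeneousSubmodule 𝕜 (wt k N) e)
    (n : Fin k → ℤ) (m : M) :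
    projM ℳ n (a • m) = a • projM ℳ (n - e) m := by
  refine DirectSum.Decomposition.inductionOn ℳ
    (motive := fun m => projM ℳ n (a • m) = a • projM ℳ (n - e) m) ?_ ?_ ?_ m
  · simp [projM_zero]
  · intro μ mi
    have hmi : (mi : M) ∈ ℳ μ := mi.2
    have hsm : a • (mi : M) ∈ ℳ (e + μ) := hsmul e μ a ha _ hmi
    by_cases hn : n = e + μ
    · rw [projM_of_mem_same ℳ (show a • (mi : M) ∈ ℳ n from hn ▸ hsm)]
      have h2 : n - e = μ := by rw [hn]; abel
      rw [h2, projM_of_mem_same ℳ hmi]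
    · rw [projM_of_mem_ne ℳ hsm (fun h => hn h.symm)]
      have h2 : n - e ≠ μ := fun h => hn (by rw [← h]; abel)
      rw [projM_of_mem_ne ℳ hmi (fun h => h2 h.symm), smul_zero]
  · intro m1 m2 h1 h2
    rw [smul_add, projM_add, projM_add, h1, h2, smul_add]

lemma projM_smul_eq
    (hsmul : ∀ (e n : Fin k → ℤ), ∀ s ∈ weightedHomogeneousSubmodule 𝕜 (wt k N) e,
      ∀ m ∈ ℳ n, s • m ∈ ℳ (e + n))
    (s : SS k N 𝕜) (m : M) (n : Fin k → ℤ) :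
    projM ℳ n (s • m) =
      ∑ e ∈ compSupp s, weightedHomogeneousComponent (wt k N) e s • projM ℳ (n - e) m := by
  conv_lhs => rw [← sum_compSupp s, Finset.sum_smul]
  rw [projM_sum]
  exact Finset.sum_congr rfl fun e _ =>
    projM_smul_homog hsmul (weightedHomogeneousComponent_mem (wt k N) s e) n m

variable (ℳ) in
def GradedS (P : Submodule (SS k N 𝕜) M) : Prop := ∀ m ∈ P, ∀ n, projM ℳ n m ∈ P

lemma gradedS_top : GradedS ℳ (⊤ : Submodule (SS k N 𝕜) M) := fun _ _ _ => trivial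

lemma gradedS_bot : GradedS ℳ (⊥ : Submodule (SS k N 𝕜) M) := by
  intro m hm n
  rw [Submodule.mem_bot] at hm ⊢
  rw [hm, projM_zero]

lemma gradedS_smul
    (hsmul : ∀ (e n : Fin k → ℤ), ∀ s ∈ weightedHomogeneousSubmodule 𝕜 (wt k N) e,
      ∀ m ∈ ℳ n, s • m ∈ ℳ (e + n))
    {I : Ideal (SS k N 𝕜)} (hI : IsHomog k N 𝕜 I)
    {P : Submodule (SS k N 𝕜) M} (hP : GradedS ℳ P) : GradedS ℳ (I • P) := by
  intro x hx n
  refine Submodule.smul_induction_on hx (fun a ha p hp => ?_) (fun y z hy hz => ?_)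
  · rw [projM_smul_eq hsmul]
    exact Submodule.sum_mem _ fun e _ => Submodule.smul_mem_smul (hI a ha e) (hP p hp _)
  · rw [projM_add]; exact Submodule.add_mem _ hy hz

variable (ℳ) in
def DleM (l : Fin k) (β : ℤ) (m : M) : Prop := ∀ ν : Fin k → ℤ, projM ℳ ν m ≠ 0 → β ≤ ν l

lemma dleM_add {l : Fin k} {β : ℤ} {x y : M} (hx : DleM ℳ l β x) (hy : DleM ℳ l β y) :
    DleM ℳ l β (x + y) := by
  intro ν h
  rw [projM_add] at h
  by_cases h1 : projM ℳ ν x = 0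
  · exact hy ν (fun h2 => h (by rw [h1, h2, add_zero]))
  · exact hx ν h1

lemma dleM_smul
    (hsmul : ∀ (e n : Fin k → ℤ), ∀ s ∈ weightedHomogeneousSubmodule 𝕜 (wt k N) e,
      ∀ m ∈ ℳ n, s • m ∈ ℳ (e + n))
    {l : Fin k} {γ β : ℤ} {a : SS k N 𝕜} {m : M}
    (ha : DleR l γ a) (hm : DleM ℳ l β m) : DleM ℳ l (γ + β) (a • m) := by
  intro ν h
  rw [projM_smul_eq hsmul] at h
  obtain ⟨e, _, he⟩ := Finset.exists_ne_zero_of_sum_ne_zero h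
  have h1 : weightedHomogeneousComponent (wt k N) e a ≠ 0 :=
    fun h0 => he (by rw [h0, zero_smul])
  have h2 : projM ℳ (ν - e) m ≠ 0 := fun h0 => he (by rw [h0, smul_zero])
  have ha' := ha e h1
  have hm' := hm _ h2
  have hsub : (ν - e) l = ν l - e l := rfl
  omega

lemma dleM_smul_submodule
    (hsmul : ∀ (e n : Fin k → ℤ), ∀ s ∈ weightedHomogeneousSubmodule 𝕜 (wt k N) e,
      ∀ m ∈ ℳ n, s • m ∈ ℳ (e + n))
    {l : Fin k} {γ β : ℤ} {K : Ideal (SS k N 𝕜)} {P : Submodule (SS k N 𝕜) M}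
    (hK : ∀ a ∈ K, DleR l γ a) (hP : ∀ m ∈ P, DleM ℳ l β m) :
    ∀ x ∈ K • P, DleM ℳ l (γ + β) x := by
  intro x hx
  exact Submodule.smul_induction_on hx (fun a ha p hp => dleM_smul hsmul (hK a ha) (hP p hp))
    (fun y z hy hz => dleM_add hy hz)

lemma nakayama
    (hsmul : ∀ (e n : Fin k → ℤ), ∀ s ∈ weightedHomogeneousSubmodule 𝕜 (wt k N) e,
      ∀ m ∈ ℳ n, s • m ∈ ℳ (e + n))
    (B : ℤ) (hB : ∀ ν : Fin k → ℤ, ∀ m' : M, m' ∈ ℳ ν → m' ≠ 0 → B ≤ tauz ν)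
    {P Q : Submodule (SS k N 𝕜) M} (hP : GradedS ℳ P) (hQ : GradedS ℳ Q)
    (hPQ : P ≤ Q ⊔ (mIdeal k N 𝕜) • P) : P ≤ Q := by
  have main : ∀ t : ℕ, ∀ ν : Fin k → ℤ, ∀ m : M,
      m ∈ ℳ ν → m ∈ P → tauz ν < B + t → m ∈ Q := by
    intro t
    induction t with
    | zero =>
      intro ν m hmν hmP hlt
      by_cases hm0 : m = 0
      · rw [hm0]; exact zero_mem _
      · have := hB ν m hmν hm0
        simp only [Nat.cast_zero] at hlt
        omega
    | succ t ih =>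
      intro ν m hmν hmP hlt
      obtain ⟨q, hq, r, hr, hqr⟩ := Submodule.mem_sup.mp (hPQ hmP)
      have hproj : ∀ x ∈ (mIdeal k N 𝕜) • P, projM ℳ ν x ∈ Q := by
        intro x hx
        refine Submodule.smul_induction_on hx (fun a ha p hp => ?_) (fun y z hy hz => ?_)
        · rw [projM_smul_eq hsmul]
          refine Submodule.sum_mem _ fun e _ => ?_
          by_cases h0 : weightedHomogeneousComponent (wt k N) e a = 0
          · rw [h0, zero_smul]; exact zero_mem _
          · have hmem : weightedHomogeneousComponent (wt k N) e a ∈ mIdeal k N 𝕜 :=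
              isHomog_mIdeal a ha e
            have htau : 1 ≤ tauz e := tauz_pos_of_homog_mem
              (weightedHomogeneousComponent_isWeightedHomogeneous e a) h0 hmem
            refine Submodule.smul_mem _ _ (ih _ _ (projM_mem ℳ _ p) (hP p hp _) ?_)
            rw [tauz_sub]
            push_cast at hlt ⊢
            omega
        · rw [projM_add]; exact Submodule.add_mem _ hy hz
      have hm' : m = projM ℳ ν q + projM ℳ ν r := by
        rw [← projM_add]
        rw [hqr, projM_of_mem_same ℳ hmν]
      rw [hm']
      exact Submodule.add_mem _ (hQ q hq ν) (hproj r hr)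
  intro x hx
  obtain ⟨s, _, hs⟩ := sum_projM ℳ x
  rw [← hs]
  refine Submodule.sum_mem _ fun ν _ => ?_
  refine main (tauz ν - B + 1).toNat ν _ (projM_mem ℳ ν x) (hP x hx ν) ?_
  omega

lemma exists_bound [Module.Finite (SS k N 𝕜) M]
    (hsmul : ∀ (e n : Fin k → ℤ), ∀ s ∈ weightedHomogeneousSubmodule 𝕜 (wt k N) e,
      ∀ m ∈ ℳ n, s • m ∈ ℳ (e + n)) :
    ∃ B : ℤ, ∀ ν : Fin k → ℤ, ∀ m : M, m ∈ ℳ ν → m ≠ 0 → B ≤ tauz ν := by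
  classical
  obtain ⟨s, hs⟩ := Module.Finite.fg_top (R := SS k N 𝕜) (M := M)
  set T : Finset ℤ := s.biUnion (fun x => (DirectSum.decompose ℳ x).support.image tauz) with hT
  set B : ℤ := if h : T.Nonempty then T.min' h else 0 with hB
  have key : ∀ m ∈ Submodule.span (SS k N 𝕜) (↑s : Set M),
      ∀ ν : Fin k → ℤ, projM ℳ ν m ≠ 0 → B ≤ tauz ν := by
    intro m hm
    induction hm using Submodule.span_induction with
    | mem x hx =>
      intro ν hν
      have hνs : ν ∈ (DirectSum.decompose ℳ x).support := by
        rw [DFinsupp.mem_support_iff]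
        intro h0
        exact hν (by simp [projM, h0])
      have hmem : tauz ν ∈ T := Finset.mem_biUnion.mpr
        ⟨x, hx, Finset.mem_image.mpr ⟨ν, hνs, rfl⟩⟩
      rw [hB, dif_pos ⟨_, hmem⟩]
      exact T.min'_le _ hmem
    | zero => intro ν hν; exact absurd (projM_zero ℳ ν) hν
    | add x y hx hy ihx ihy =>
      intro ν hν
      rw [projM_add] at hν
      by_cases h1 : projM ℳ ν x = 0
      · exact ihy ν (fun h2 => hν (by rw [h1, h2, add_zero]))
      · exact ihx ν h1
    | smul a x hx ih =>
      intro ν hν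
      rw [projM_smul_eq hsmul] at hν
      obtain ⟨e, _, he⟩ := Finset.exists_ne_zero_of_sum_ne_zero hν
      have h1 : weightedHomogeneousComponent (wt k N) e a ≠ 0 :=
        fun h0 => he (by rw [h0, zero_smul])
      have h2 : projM ℳ (ν - e) x ≠ 0 := fun h0 => he (by rw [h0, smul_zero])
      have h3 : 0 ≤ tauz e :=
        tauz_nonneg_of_homog (weightedHomogeneousComponent_isWeightedHomogeneous e a) h1
      have h4 := ih _ h2
      rw [tauz_sub] at h4
      omega
  refine ⟨B, fun ν m hm h0 => ?_⟩
  have hmem : m ∈ Submodule.span (SS k N 𝕜) (↑s : Set M) := by rw [hs]; trivial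
  exact key m hmem ν (by rw [projM_of_mem_same ℳ hm]; exact h0)

end Mod

section Ring3

noncomputable local instance instDecompR :
    DirectSum.Decomposition (weightedHomogeneousSubmodule 𝕜 (wt k N)) :=
  weightedDecomposition 𝕜 (wt k N)

lemma hsmulR : ∀ (e n : Fin k → ℤ), ∀ s ∈ weightedHomogeneousSubmodule 𝕜 (wt k N) e,
    ∀ f ∈ weightedHomogeneousSubmodule 𝕜 (wt k N) n,
      s • f ∈ weightedHomogeneousSubmodule 𝕜 (wt k N) (e + n) := by
  intro e n s hs f hf
  rw [smul_eq_mul]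
  exact IsWeightedHomogeneous.mul hs hf

lemma projM_poly (n : Fin k → ℤ) (f : SS k N 𝕜) :
    projM (weightedHomogeneousSubmodule 𝕜 (wt k N)) n f =
      weightedHomogeneousComponent (wt k N) n f :=
  MvPolynomial.decompose'_apply 𝕜 (wt k N) f n

lemma comp_mul (s f : SS k N 𝕜) (n : Fin k → ℤ) :
    weightedHomogeneousComponent (wt k N) n (s * f) =
      ∑ e ∈ compSupp s, weightedHomogeneousComponent (wt k N) e s *
        weightedHomogeneousComponent (wt k N) (n - e) f := by
  have h := projM_smul_eq (ℳ := weightedHomogeneousSubmodule 𝕜 (wt k N)) hsmulR s f n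
  simpa [projM_poly, smul_eq_mul] using h

lemma isHomog_top : IsHomog k N 𝕜 ⊤ := fun _ _ _ => trivial

lemma isHomog_bot : IsHomog k N 𝕜 ⊥ := by
  intro f hf n
  rw [Submodule.mem_bot] at hf
  rw [hf, map_zero]
  exact zero_mem _

lemma isHomog_span {S : Set (SS k N 𝕜)} (hS : ∀ g ∈ S, ∃ ν, IsWeightedHomogeneous (wt k N) g ν) :
    IsHomog k N 𝕜 (Ideal.span S) := by
  intro f hf
  induction hf using Submodule.span_induction with
  | mem x hx =>
    intro n
    obtain ⟨ν, hν⟩ := hS x hx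
    by_cases h : n = ν
    · rw [h, IsWeightedHomogeneous.weightedHomogeneousComponent_same hν]
      exact Ideal.subset_span hx
    · rw [IsWeightedHomogeneous.weightedHomogeneousComponent_ne _ hν h]
      exact zero_mem _
  | zero => intro n; rw [map_zero]; exact zero_mem _
  | add x y hx hy ihx ihy => intro n; rw [map_add]; exact add_mem (ihx n) (ihy n)
  | smul a x hx ih =>
    intro n
    rw [smul_eq_mul, comp_mul]
    exact Submodule.sum_mem _ fun e _ => Ideal.mul_mem_left _ _ (ih (n - e))

lemma isHomog_mul {I J : Ideal (SS k N 𝕜)} (hI : IsHomog k N 𝕜 I) (hJ : IsHomog k N 𝕜 J) :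
    IsHomog k N 𝕜 (I * J) := by
  intro f hf
  refine Submodule.mul_induction_on hf (fun a ha b hb => ?_) (fun x y hx hy => ?_)
  · intro n
    rw [comp_mul]
    exact Submodule.sum_mem _ fun e _ => Ideal.mul_mem_mul (hI a ha e) (hJ b hb (n - e))
  · intro n; rw [map_add]; exact add_mem (hx n) (hy n)

lemma isHomog_pow {I : Ideal (SS k N 𝕜)} (hI : IsHomog k N 𝕜 I) (n : ℕ) :
    IsHomog k N 𝕜 (I ^ n) := by
  induction n with
  | zero => rw [pow_zero, Ideal.one_eq_top]; exact isHomog_top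
  | succ n ih => rw [pow_succ]; exact isHomog_mul ih hI

lemma dleR_span {l : Fin k} {γ : ℤ} {S : Set (SS k N 𝕜)}
    (hS : ∀ g ∈ S, ∃ ν, IsWeightedHomogeneous (wt k N) g ν ∧ γ ≤ ν l) :
    ∀ a ∈ Ideal.span S, DleR l γ a := by
  intro a ha
  induction ha using Submodule.span_induction with
  | mem x hx =>
    intro e he
    obtain ⟨ν, hν, hγ⟩ := hS x hx
    by_cases h : e = ν
    · rw [h]; exact hγ
    · exact absurd (IsWeightedHomogeneous.weightedHomogeneousComponent_ne _ hν h) he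
  | zero => intro e he; rw [map_zero] at he; exact absurd rfl he
  | add x y hx hy ihx ihy =>
    intro e he
    rw [map_add] at he
    by_cases h1 : weightedHomogeneousComponent (wt k N) e x = 0
    · exact ihy e (fun h2 => he (by rw [h1, h2, add_zero]))
    · exact ihx e h1
  | smul s x hx ih =>
    intro e he
    rw [smul_eq_mul, comp_mul] at he
    obtain ⟨e', _, he'⟩ := Finset.exists_ne_zero_of_sum_ne_zero he
    have h1 : weightedHomogeneousComponent (wt k N) e' s ≠ 0 :=
      fun h0 => he' (by rw [h0, zero_mul])
    have h2 : weightedHomogeneousComponent (wt k N) (e - e') x ≠ 0 :=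
      fun h0 => he' (by rw [h0, mul_zero])
    have h3 : 0 ≤ e' l :=
      coord_nonneg_of_homog (weightedHomogeneousComponent_isWeightedHomogeneous e' s) h1 l
    have h4 := ih _ h2
    have hsub : (e - e') l = e l - e' l := rfl
    omega

lemma comp_mem_mul_mIdeal {l : Fin k} {c : ℤ} {S : Set (SS k N 𝕜)}
    (hS : ∀ g ∈ S, ∃ ν, IsWeightedHomogeneous (wt k N) g ν ∧ ν l ≤ c) :
    ∀ f ∈ Ideal.span S, ∀ ν : Fin k → ℤ, c < ν l →
      weightedHomogeneousComponent (wt k N) ν f ∈ mIdeal k N 𝕜 * Ideal.span S := by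
  intro f hf
  induction hf using Submodule.span_induction with
  | mem x hx =>
    intro ν hν
    obtain ⟨μ, hμ, hc⟩ := hS x hx
    by_cases h : ν = μ
    · exfalso
      rw [h] at hν
      omega
    · rw [IsWeightedHomogeneous.weightedHomogeneousComponent_ne _ hμ h]
      exact zero_mem _
  | zero => intro ν hν; rw [map_zero]; exact zero_mem _
  | add x y hx hy ihx ihy => intro ν hν; rw [map_add]; exact add_mem (ihx ν hν) (ihy ν hν)
  | smul s x hx ih =>
    intro ν hν
    rw [smul_eq_mul, comp_mul]
    refine Submodule.sum_mem _ fun e _ => ?_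
    by_cases h0 : weightedHomogeneousComponent (wt k N) e s = 0
    · rw [h0, zero_mul]; exact zero_mem _
    by_cases he : e = 0
    · subst he
      have h1 : ν - 0 = ν := by simp
      rw [h1]
      exact Ideal.mul_mem_left _ _ (ih ν hν)
    · have hm : weightedHomogeneousComponent (wt k N) e s ∈ mIdeal k N 𝕜 :=
        homog_mem_mIdeal (weightedHomogeneousComponent_isWeightedHomogeneous e s) he
      have hx' : weightedHomogeneousComponent (wt k N) (ν - e) x ∈ Ideal.span S :=
        isHomog_span (fun g hg => (hS g hg).imp fun μ h => h.1) x hx (ν - e)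
      exact Ideal.mul_mem_mul hm hx'

end Ring3

lemma pow_sup_le (J J' : Ideal (SS k N 𝕜)) (j : ℕ) :
    (J ⊔ J') ^ (j + 1) ≤ J * (J ⊔ J') ^ j ⊔ J' ^ (j + 1) := by
  induction j with
  | zero => simp [pow_one, pow_zero, mul_one]
  | succ j ih =>
    have h1 : (J ⊔ J') ^ (j + 2) = (J ⊔ J') ^ (j + 1) * (J ⊔ J') := pow_succ _ _
    have e1 : J * (J ⊔ J') ^ j * (J ⊔ J') = J * (J ⊔ J') ^ (j + 1) := by
      rw [mul_assoc, ← pow_succ]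
    have e2 : J' ^ (j + 1) * (J ⊔ J') ≤ J * (J ⊔ J') ^ (j + 1) ⊔ J' ^ (j + 2) := by
      rw [Submodule.mul_sup]
      refine sup_le (le_sup_of_le_left ?_) ?_
      · rw [mul_comm]
        exact Ideal.mul_mono_right (Ideal.pow_right_mono le_sup_right _)
      · rw [← pow_succ]
        exact le_sup_right
    rw [h1]
    calc (J ⊔ J') ^ (j + 1) * (J ⊔ J')
        ≤ (J * (J ⊔ J') ^ j ⊔ J' ^ (j + 1)) * (J ⊔ J') := Ideal.mul_mono_left ih
      _ = J * (J ⊔ J') ^ j * (J ⊔ J') ⊔ J' ^ (j + 1) * (J ⊔ J') := Submodule.sup_mul _ _ _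
      _ ≤ J * (J ⊔ J') ^ (j + 1) ⊔ J' ^ (j + 2) := by
          rw [e1]; exact sup_le le_sup_left e2

lemma mul_smul_mod {M : Type*} [AddCommGroup M] [Module 𝕜 M]
    [Module (SS k N 𝕜) M] (A B : Ideal (SS k N 𝕜)) (P : Submodule (SS k N 𝕜) M) :
    (A * B) • P = A • (B • P) := by
  rw [← Ideal.smul_eq_mul, Submodule.smul_assoc]

lemma smul_comm_mod {M : Type*} [AddCommGroup M] [Module 𝕜 M]
    [Module (SS k N 𝕜) M] (A B : Ideal (SS k N 𝕜)) (P : Submodule (SS k N 𝕜) M) :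
    A • (B • P) = B • (A • P) := by
  rw [← mul_smul_mod, mul_comm, mul_smul_mod]

lemma zE_le_zE {a b : ℤ} (h : a ≤ b) : zE a ≤ zE b := by
  rw [zE, zE, EReal.coe_le_coe_iff]
  exact_mod_cast h

end Aux

/-- `d^{(l)}(I^n M) ≥ n·ρ^{(l)}_M(I) + beg^{(l)}(M)` for all `n ≥ 0`,
where `ρ^{(l)}_M(I)` is the infimum of `d^{(l)}(J)` over all `M`-reductions `J ⊆ I`
and `beg^{(l)}(M) = min { n_l | M_n ≠ 0 }`. -/
theorem dl_pow_smul_ge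
    (k : ℕ) (N : Fin k → ℕ) (𝕜 : Type*) [Field 𝕜]
    (M : Type*) [AddCommGroup M] [Module 𝕜 M]
    [Module (MvPolynomial (Σ l : Fin k, Fin (N l)) 𝕜) M]
    [IsScalarTower 𝕜 (MvPolynomial (Σ l : Fin k, Fin (N l)) 𝕜) M]
    [Module.Finite (MvPolynomial (Σ l : Fin k, Fin (N l)) 𝕜) M]
    (ℳ : (Fin k → ℤ) → Submodule 𝕜 M)
    [DirectSum.Decomposition ℳ]
    (hsmul : ∀ (e n : Fin k → ℤ),
      ∀ s ∈ weightedHomogeneousSubmodule 𝕜 (wt k N) e,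
      ∀ m ∈ ℳ n, s • m ∈ ℳ (e + n))
    (I : Ideal (MvPolynomial (Σ l : Fin k, Fin (N l)) 𝕜)) (hI : IsHomog k N 𝕜 I)
    (l : Fin k)
    (ρ : EReal)
    (hρ : IsLeast {x : EReal |
      ∃ J, IsMReduction k N 𝕜 M I J ∧ x = dlIdeal k N 𝕜 l J} ρ)
    (b : ℤ)
    (hb : IsLeast {d : ℤ | ∃ n : Fin k → ℤ, n l = d ∧ ℳ n ≠ ⊥} b) :
    ∀ n : ℕ,
      zE (n : ℤ) * ρ + zE b ≤
        dlSubmodule k N 𝕜 M ℳ l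
          (I ^ n • ⊤ : Submodule (MvPolynomial (Σ l : Fin k, Fin (N l)) 𝕜) M) := by
  classical
  obtain ⟨B, hB⟩ := exists_bound (ℳ := ℳ) hsmul
  intro n
  by_cases hdtop : dlSubmodule k N 𝕜 M ℳ l
      (I ^ n • ⊤ : Submodule (MvPolynomial (Σ l : Fin k, Fin (N l)) 𝕜) M) = ⊤
  · rw [hdtop]; exact le_top
  have hPgr : GradedS ℳ (I ^ n • ⊤ : Submodule (MvPolynomial (Σ l : Fin k, Fin (N l)) 𝕜) M) :=
    gradedS_smul hsmul (isHomog_pow hI n) gradedS_top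
  have hgood : ∀ (ν : Fin k → ℤ) (m : M), m ∈ ℳ ν →
      m ∈ (I ^ n • ⊤ : Submodule (MvPolynomial (Σ l : Fin k, Fin (N l)) 𝕜) M) →
      m ∉ (mIdeal k N 𝕜 • (I ^ n • ⊤ : Submodule (MvPolynomial (Σ l : Fin k, Fin (N l)) 𝕜) M) :
        Submodule (MvPolynomial (Σ l : Fin k, Fin (N l)) 𝕜) M) →
      zE (ν l) ≤ dlSubmodule k N 𝕜 M ℳ l
        (I ^ n • ⊤ : Submodule (MvPolynomial (Σ l : Fin k, Fin (N l)) 𝕜) M) :=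
    fun ν m h1 h2 h3 => le_sSup ⟨ν, ⟨m, h1, h2, h3⟩, rfl⟩
  by_cases hempty : ∀ (ν : Fin k → ℤ) (m : M), m ∈ ℳ ν →
      m ∈ (I ^ n • ⊤ : Submodule (MvPolynomial (Σ l : Fin k, Fin (N l)) 𝕜) M) →
      m ∈ (mIdeal k N 𝕜 • (I ^ n • ⊤ : Submodule (MvPolynomial (Σ l : Fin k, Fin (N l)) 𝕜) M) :
        Submodule (MvPolynomial (Σ l : Fin k, Fin (N l)) 𝕜) M)
  · have hPle : (I ^ n • ⊤ : Submodule (MvPolynomial (Σ l : Fin k, Fin (N l)) 𝕜) M) ≤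
        ⊥ ⊔ mIdeal k N 𝕜 • (I ^ n • ⊤ : Submodule (MvPolynomial (Σ l : Fin k, Fin (N l)) 𝕜) M) := by
      intro x hx
      obtain ⟨s, _, hs⟩ := sum_projM ℳ x
      rw [← hs]
      exact Submodule.sum_mem _ fun ν _ =>
        Submodule.mem_sup_right (hempty ν _ (projM_mem ℳ ν x) (hPgr x hx ν))
    have hPbot : (I ^ n • ⊤ : Submodule (MvPolynomial (Σ l : Fin k, Fin (N l)) 𝕜) M) ≤ ⊥ :=
      nakayama hsmul B hB hPgr gradedS_bot hPle
    cases n with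
    | zero =>
      exfalso
      obtain ⟨ν₀, hν₀l, hν₀⟩ := hb.1
      obtain ⟨m₀, hm₀, hm₀ne⟩ := (Submodule.ne_bot_iff _).mp hν₀
      apply hm₀ne
      have hmem : m₀ ∈ (I ^ 0 • ⊤ : Submodule (MvPolynomial (Σ l : Fin k, Fin (N l)) 𝕜) M) := by
        rw [pow_zero, Ideal.one_eq_top, Submodule.top_smul]
        trivial
      simpa using hPbot hmem
    | succ n' =>
      have hredbot : IsMReduction k N 𝕜 M I ⊥ := by
        refine ⟨bot_le, isHomog_bot, n' + 1, fun m hm => ?_⟩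
        have h1 : (I ^ (m + 1) • ⊤ : Submodule (MvPolynomial (Σ l : Fin k, Fin (N l)) 𝕜) M) = ⊥ := by
          obtain ⟨j, hj⟩ : ∃ j, m + 1 = j + (n' + 1) := ⟨m - n', by omega⟩
          rw [hj, pow_add, mul_smul_mod, le_bot_iff.mp hPbot, Submodule.smul_bot]
        rw [h1, Submodule.bot_smul]
      have hdlbot : dlIdeal k N 𝕜 l (⊥ : Ideal (MvPolynomial (Σ l : Fin k, Fin (N l)) 𝕜)) = ⊥ := by
        rw [dlIdeal, sSup_eq_bot]
        rintro x ⟨ν, ⟨f, hf, _, hfnot⟩, rfl⟩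
        exfalso
        apply hfnot
        rw [Submodule.mem_bot] at hf
        rw [hf]
        exact zero_mem _
      have hρbot : ρ = ⊥ := le_bot_iff.mp (hdlbot ▸ hρ.2 ⟨⊥, hredbot, rfl⟩)
      rw [hρbot]
      have hpos : (0:ℝ) < ((((n' + 1 : ℕ) : ℤ)) : ℝ) := by push_cast; positivity
      rw [show zE (((n' + 1 : ℕ) : ℤ)) = ((((((n' + 1 : ℕ) : ℤ)) : ℝ)) : EReal) from rfl,
        EReal.coe_mul_bot_of_pos hpos, EReal.bot_add]
      exact bot_le
  · push_neg at hempty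
    obtain ⟨ν₁, m₁, hm₁ℳ, hm₁P, hm₁not⟩ := hempty
    have hm₁ne : m₁ ≠ 0 := fun h => hm₁not (h ▸ zero_mem _)
    have hbν₁ : b ≤ ν₁ l := hb.2 ⟨ν₁, rfl, (Submodule.ne_bot_iff _).mpr ⟨m₁, hm₁ℳ, hm₁ne⟩⟩
    have hd1 : zE (ν₁ l) ≤ dlSubmodule k N 𝕜 M ℳ l
        (I ^ n • ⊤ : Submodule (MvPolynomial (Σ l : Fin k, Fin (N l)) 𝕜) M) :=
      hgood ν₁ m₁ hm₁ℳ hm₁P hm₁not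
    cases n with
    | zero =>
      rw [show zE (((0:ℕ) : ℤ)) = (0 : EReal) by norm_num [zE], zero_mul, zero_add]
      exact le_trans (zE_le_zE hbν₁) hd1
    | succ n' =>
      have hdbot : dlSubmodule k N 𝕜 M ℳ l
          (I ^ (n' + 1) • ⊤ : Submodule (MvPolynomial (Σ l : Fin k, Fin (N l)) 𝕜) M) ≠ ⊥ := by
        intro h
        rw [h, le_bot_iff] at hd1
        exact EReal.coe_ne_bot _ hd1
      obtain ⟨r, hdr⟩ : ∃ r : ℝ, ((r : ℝ) : EReal) = dlSubmodule k N 𝕜 M ℳ l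
          (I ^ (n' + 1) • ⊤ : Submodule (MvPolynomial (Σ l : Fin k, Fin (N l)) 𝕜) M) :=
        ⟨_, EReal.coe_toReal hdtop hdbot⟩
      have hnpos : (0:ℝ) < ((n' + 1 : ℕ) : ℝ) := by positivity
      set c : ℤ := ⌊(r - (b : ℝ)) / ((n' + 1 : ℕ) : ℝ)⌋ with hc
      have hc1 : ((n' + 1 : ℕ) : ℝ) * (c : ℝ) ≤ r - (b : ℝ) := by
        have h := Int.floor_le ((r - (b : ℝ)) / ((n' + 1 : ℕ) : ℝ))
        rw [← hc] at h
        calc ((n' + 1 : ℕ) : ℝ) * (c : ℝ)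
            ≤ ((n' + 1 : ℕ) : ℝ) * ((r - (b:ℝ)) / ((n' + 1 : ℕ) : ℝ)) :=
              mul_le_mul_of_nonneg_left h hnpos.le
          _ = r - (b:ℝ) := by field_simp
      have hc2 : r - (b:ℝ) < ((n' + 1 : ℕ) : ℝ) * ((c : ℝ) + 1) := by
        have h := Int.lt_floor_add_one ((r - (b : ℝ)) / ((n' + 1 : ℕ) : ℝ))
        rw [← hc] at h
        calc r - (b:ℝ) = ((n' + 1 : ℕ) : ℝ) * ((r - (b:ℝ)) / ((n' + 1 : ℕ) : ℝ)) := by field_simp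
          _ < ((n' + 1 : ℕ) : ℝ) * ((c : ℝ) + 1) := by
              exact mul_lt_mul_of_pos_left h hnpos
      set SJ : Set (MvPolynomial (Σ l : Fin k, Fin (N l)) 𝕜) :=
        {f | ∃ ν : Fin k → ℤ, IsWeightedHomogeneous (wt k N) f ν ∧ f ∈ I ∧ ν l ≤ c} with hSJ
      set SJ' : Set (MvPolynomial (Σ l : Fin k, Fin (N l)) 𝕜) :=
        {f | ∃ ν : Fin k → ℤ, IsWeightedHomogeneous (wt k N) f ν ∧ f ∈ I ∧ c < ν l} with hSJ'
      have hJI : Ideal.span SJ ≤ I := Ideal.span_le.mpr (by rintro g ⟨ν, _, hgI, _⟩; exact hgI)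
      have hJ'I : Ideal.span SJ' ≤ I := Ideal.span_le.mpr (by rintro g ⟨ν, _, hgI, _⟩; exact hgI)
      have hIJJ' : I = Ideal.span SJ ⊔ Ideal.span SJ' := by
        refine le_antisymm ?_ (sup_le hJI hJ'I)
        intro f hf
        rw [← sum_compSupp f]
        refine Submodule.sum_mem _ fun e _ => ?_
        by_cases hle : e l ≤ c
        · exact Submodule.mem_sup_left (Ideal.subset_span
            ⟨e, weightedHomogeneousComponent_isWeightedHomogeneous e f, hI f hf e, hle⟩)
        · exact Submodule.mem_sup_right (Ideal.subset_span
            ⟨e, weightedHomogeneousComponent_isWeightedHomogeneous e f, hI f hf e, by omega⟩)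
      have hJhom : IsHomog k N 𝕜 (Ideal.span SJ) :=
        isHomog_span (by rintro g ⟨ν, h1, _, _⟩; exact ⟨ν, h1⟩)
      have hJ'hom : IsHomog k N 𝕜 (Ideal.span SJ') :=
        isHomog_span (by rintro g ⟨ν, h1, _, _⟩; exact ⟨ν, h1⟩)
      have hpow : I ^ (n' + 1) ≤ Ideal.span SJ * I ^ n' ⊔ Ideal.span SJ' ^ (n' + 1) := by
        rw [hIJJ']
        exact pow_sup_le _ _ n'
      have hbase : ∀ m : M, DleM ℳ l b m := fun m ν hν =>
        hb.2 ⟨ν, rfl, (Submodule.ne_bot_iff _).mpr ⟨projM ℳ ν m, projM_mem ℳ ν m, hν⟩⟩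
      have hJ'dle : ∀ a ∈ Ideal.span SJ', DleR l (c + 1) a :=
        dleR_span (by rintro g ⟨ν, h1, _, h3⟩; exact ⟨ν, h1, by omega⟩)
      have hJ'pow : ∀ j : ℕ, ∀ x ∈ ((Ideal.span SJ' ^ j) • ⊤ :
          Submodule (MvPolynomial (Σ l : Fin k, Fin (N l)) 𝕜) M),
          DleM ℳ l ((j : ℤ) * (c + 1) + b) x := by
        intro j
        induction j with
        | zero =>
          intro x _
          have h0 : ((0:ℕ):ℤ) * (c+1) + b = b := by simp
          rw [h0]
          exact hbase x
        | succ j ih =>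
          intro x hx
          have hx' : x ∈ Ideal.span SJ' • ((Ideal.span SJ' ^ j) • ⊤ :
              Submodule (MvPolynomial (Σ l : Fin k, Fin (N l)) 𝕜) M) := by
            rw [← mul_smul_mod, ← pow_succ']
            exact hx
          have harr : ((j+1:ℕ):ℤ) * (c+1) + b = (c+1) + ((j:ℤ)*(c+1)+b) := by push_cast; ring
          rw [harr]
          exact dleM_smul_submodule hsmul hJ'dle ih x hx'
      have habs : ((Ideal.span SJ' ^ (n'+1)) • ⊤ :
          Submodule (MvPolynomial (Σ l : Fin k, Fin (N l)) 𝕜) M) ≤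
          mIdeal k N 𝕜 • (I ^ (n'+1) • ⊤ :
            Submodule (MvPolynomial (Σ l : Fin k, Fin (N l)) 𝕜) M) := by
        intro x hx
        obtain ⟨s, _, hs⟩ := sum_projM ℳ x
        rw [← hs]
        refine Submodule.sum_mem _ fun ν _ => ?_
        by_cases h0 : projM ℳ ν x = 0
        · rw [h0]; exact zero_mem _
        · have hbd := hJ'pow (n'+1) x hx ν h0
          have hJ'gr : GradedS ℳ ((Ideal.span SJ' ^ (n'+1)) • ⊤ :
              Submodule (MvPolynomial (Σ l : Fin k, Fin (N l)) 𝕜) M) :=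
            gradedS_smul hsmul (isHomog_pow hJ'hom _) gradedS_top
          have hmemP : projM ℳ ν x ∈ (I ^ (n'+1) • ⊤ :
              Submodule (MvPolynomial (Σ l : Fin k, Fin (N l)) 𝕜) M) :=
            Submodule.smul_mono_left (Ideal.pow_right_mono hJ'I _) (hJ'gr x hx ν)
          by_contra hnot
          have hle := hgood ν _ (projM_mem ℳ ν x) hmemP hnot
          rw [← hdr] at hle
          have hle' : ((ν l : ℤ) : ℝ) ≤ r := by
            rwa [show zE (ν l) = (((ν l : ℤ) : ℝ) : EReal) from rfl,
              EReal.coe_le_coe_iff] at hle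
          have hbd' : ((n' + 1 : ℕ) : ℝ) * ((c:ℝ) + 1) + (b:ℝ) ≤ ((ν l : ℤ) : ℝ) := by
            exact_mod_cast hbd
          linarith
      have hQgr : GradedS ℳ (Ideal.span SJ • (I ^ n' • ⊤ :
          Submodule (MvPolynomial (Σ l : Fin k, Fin (N l)) 𝕜) M)) :=
        gradedS_smul hsmul hJhom (gradedS_smul hsmul (isHomog_pow hI n') gradedS_top)
      have hstep : (I ^ (n'+1) • ⊤ : Submodule (MvPolynomial (Σ l : Fin k, Fin (N l)) 𝕜) M) =
          Ideal.span SJ • (I ^ n' • ⊤ :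
            Submodule (MvPolynomial (Σ l : Fin k, Fin (N l)) 𝕜) M) := by
        refine le_antisymm ?_ ?_
        · refine nakayama hsmul B hB hPgr hQgr ?_
          calc (I ^ (n'+1) • ⊤ : Submodule (MvPolynomial (Σ l : Fin k, Fin (N l)) 𝕜) M)
              ≤ (Ideal.span SJ * I ^ n' ⊔ Ideal.span SJ' ^ (n'+1)) • ⊤ :=
                Submodule.smul_mono_left hpow
            _ = (Ideal.span SJ * I ^ n') • ⊤ ⊔ (Ideal.span SJ' ^ (n'+1)) • ⊤ :=
                Submodule.sup_smul _ _ _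
            _ ≤ Ideal.span SJ • (I ^ n' • ⊤ :
                  Submodule (MvPolynomial (Σ l : Fin k, Fin (N l)) 𝕜) M) ⊔
                mIdeal k N 𝕜 • (I ^ (n'+1) • ⊤ :
                  Submodule (MvPolynomial (Σ l : Fin k, Fin (N l)) 𝕜) M) :=
                sup_le_sup (le_of_eq (mul_smul_mod _ _ _)) habs
        · calc Ideal.span SJ • (I ^ n' • ⊤ :
                Submodule (MvPolynomial (Σ l : Fin k, Fin (N l)) 𝕜) M)
              ≤ I • (I ^ n' • ⊤ : Submodule (MvPolynomial (Σ l : Fin k, Fin (N l)) 𝕜) M) :=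
                Submodule.smul_mono_left hJI
            _ = (I * I ^ n') • ⊤ := (mul_smul_mod _ _ _).symm
            _ = I ^ (n'+1) • ⊤ := by rw [← pow_succ']
      have hred : IsMReduction k N 𝕜 M I (Ideal.span SJ) := by
        refine ⟨hJI, hJhom, n', fun m hm => ?_⟩
        obtain ⟨j, hj⟩ : ∃ j, m = n' + j := ⟨m - n', by omega⟩
        subst hj
        have e1 : n' + j + 1 = j + (n' + 1) := by omega
        have e2 : j + n' = n' + j := by omega
        calc (I ^ (n' + j + 1) • ⊤ : Submodule (MvPolynomial (Σ l : Fin k, Fin (N l)) 𝕜) M)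
            = (I ^ j * I ^ (n'+1)) • ⊤ := by rw [e1, pow_add]
          _ = I ^ j • (I ^ (n'+1) • ⊤ :
                Submodule (MvPolynomial (Σ l : Fin k, Fin (N l)) 𝕜) M) := mul_smul_mod _ _ _
          _ = I ^ j • (Ideal.span SJ • (I ^ n' • ⊤ :
                Submodule (MvPolynomial (Σ l : Fin k, Fin (N l)) 𝕜) M)) := by rw [hstep]
          _ = Ideal.span SJ • (I ^ j • (I ^ n' • ⊤ :
                Submodule (MvPolynomial (Σ l : Fin k, Fin (N l)) 𝕜) M)) := smul_comm_mod _ _ _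
          _ = Ideal.span SJ • ((I ^ j * I ^ n') • ⊤ :
                Submodule (MvPolynomial (Σ l : Fin k, Fin (N l)) 𝕜) M) := by rw [mul_smul_mod]
          _ = Ideal.span SJ • (I ^ (n' + j) • ⊤ :
                Submodule (MvPolynomial (Σ l : Fin k, Fin (N l)) 𝕜) M) := by rw [← pow_add, e2]
      have hdlJ : dlIdeal k N 𝕜 l (Ideal.span SJ) ≤ zE c := by
        refine sSup_le ?_
        rintro x ⟨ν, ⟨f, hfJ, hfhom, hfnot⟩, rfl⟩
        have hνc : ν l ≤ c := by
          by_contra hgt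
          push_neg at hgt
          apply hfnot
          have h1 := comp_mem_mul_mIdeal (l := l) (c := c) (S := SJ)
            (by rintro g ⟨ν', h1', _, h3'⟩; exact ⟨ν', h1', h3'⟩) f hfJ ν hgt
          rwa [IsWeightedHomogeneous.weightedHomogeneousComponent_same hfhom] at h1
        exact zE_le_zE hνc
      have hρc : ρ ≤ zE c := le_trans (hρ.2 ⟨Ideal.span SJ, hred, rfl⟩) hdlJ
      by_cases hρbot : ρ = ⊥
      · rw [hρbot]
        have hpos : (0:ℝ) < ((((n' + 1 : ℕ) : ℤ)) : ℝ) := by push_cast; positivity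
        rw [show zE (((n' + 1 : ℕ) : ℤ)) = ((((((n' + 1 : ℕ) : ℤ)) : ℝ)) : EReal) from rfl,
          EReal.coe_mul_bot_of_pos hpos, EReal.bot_add]
        exact bot_le
      · have hρtop : ρ ≠ ⊤ := by
          intro h
          rw [h, top_le_iff] at hρc
          exact EReal.coe_ne_top _ hρc
        have hρr : ((ρ.toReal : ℝ) : EReal) = ρ := EReal.coe_toReal hρtop hρbot
        have hy : ρ.toReal ≤ ((c:ℤ):ℝ) := by
          rw [← EReal.coe_le_coe_iff (y := ((c:ℤ):ℝ))]
          rw [hρr]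
          exact hρc
        calc zE (((n' + 1 : ℕ) : ℤ)) * ρ + zE b
            = (((((n' + 1 : ℕ) : ℤ) : ℝ) * ρ.toReal + ((b:ℤ):ℝ) : ℝ) : EReal) := by
              rw [← hρr, show zE (((n' + 1 : ℕ) : ℤ)) =
                  ((((((n' + 1 : ℕ) : ℤ)) : ℝ)) : EReal) from rfl,
                show zE b = (((b:ℤ):ℝ) : EReal) from rfl, ← EReal.coe_mul, ← EReal.coe_add,
                EReal.toReal_coe]
          _ ≤ ((r : ℝ) : EReal) := by
              rw [EReal.coe_le_coe_iff]
              have hmul : (((n' + 1 : ℕ):ℤ):ℝ) * ρ.toReal ≤ (((n' + 1 : ℕ):ℤ):ℝ) * ((c:ℤ):ℝ) :=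
                mul_le_mul_of_nonneg_left hy (by positivity)
              push_cast at hmul hc1 ⊢
              linarith
          _ = _ := hdr
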